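/- (Pointwise vanishing of vasculature) Let (T,N,Φ) be a nonnegative solution of the glioblastoma ODE system at a fixed spatial point with 0 ≤ T(t), Φ(t) ≤ K for all t and N nondecreasing with N(0) = N₀ > 0. Then Φ(t) → 0 as t → ∞. -/

import Mathlib

theorem vasculature_vanishes_pointwise
    (T N Φ N' Φ' : ℝ → ℝ) (α β₁ β₂ γ δ ρ K : ℝ)
    (hα : 0 < α) (hβ₁ : 0 < β₁) (hβ₂ : 0 < β₂) (hγ : 0 < γ)
    (hδ : 0 < δ) (hρ : 0 < ρ) (hK : 0 < K)
    (hTnonneg : ∀ t, 0 ≤ t → 0 ≤ T t) (hNnonneg : ∀ t, 0 ≤ t → 0 ≤ N t)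
    (hΦnonneg : ∀ t, 0 ≤ t → 0 ≤ Φ t)
    (hTle : ∀ t, 0 ≤ t → T t ≤ K) (hΦle : ∀ t, 0 ≤ t → Φ t ≤ K)
    (hNmono : MonotoneOn N (Set.Ici (0:ℝ)))
    (hN0 : 0 < N 0)
    (hNderiv : ∀ t, 0 ≤ t → HasDerivAt N (N' t) t)
    (hΦderiv : ∀ t, 0 ≤ t → HasDerivAt Φ (Φ' t) t)
    (hN'lb : ∀ t, 0 ≤ t → β₂ * N t * Φ t ≤ N' t)
    (hΦ'ub : ∀ t, 0 ≤ t → Φ' t ≤ γ / K * T t * Φ t - δ * T t * Φ t - β₂ * N t * Φ t)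
    (hΦ'lb : ∀ t, 0 ≤ t → N t < K → -(2 * γ + δ * K + β₂ * K) * Φ t ≤ Φ' t) :
    Filter.Tendsto Φ Filter.atTop (nhds 0) := by
  by_contra hcon
  rw [Metric.tendsto_atTop] at hcon
  push_neg at hcon
  obtain ⟨ε, hε, hfreq⟩ := hcon
  have hfreq' : ∀ A : ℝ, ∃ t, A ≤ t ∧ 0 ≤ t ∧ ε ≤ Φ t := by
    intro A
    obtain ⟨t, ht, hdd⟩ := hfreq (max A 0)
    refine ⟨t, le_trans (le_max_left _ _) ht, le_trans (le_max_right _ _) ht, ?_⟩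
    rwa [Real.dist_eq, sub_zero,
      abs_of_nonneg (hΦnonneg t (le_trans (le_max_right _ _) ht))] at hdd
  -- refined upper bound on Φ'
  have hub2 : ∀ t, 0 ≤ t → Φ' t ≤ γ * Φ t - β₂ * N t * Φ t := by
    intro t ht
    have h1 := hΦ'ub t ht
    have h2 := hTnonneg t ht
    have h4 := hΦnonneg t ht
    have h5 := hTle t ht
    have h6 : γ / K * K = γ := div_mul_cancel₀ γ hK.ne'
    nlinarith [mul_nonneg (mul_nonneg hδ.le h2) h4,
      mul_le_mul_of_nonneg_right
        (mul_le_mul_of_nonneg_left h5 (div_nonneg hγ.le hK.le)) h4]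
  have hub : ∀ t, 0 ≤ t → Φ' t ≤ γ * Φ t := by
    intro t ht
    have := hub2 t ht
    nlinarith [mul_nonneg (mul_nonneg hβ₂.le (hNnonneg t ht)) (hΦnonneg t ht)]
  have hγK : 0 < γ * K := mul_pos hγ hK
  set h : ℝ := ε / (2 * (γ * K)) with hh
  have hhpos : 0 < h := by positivity
  set d : ℝ := h * (β₂ * N 0 * (ε / 2)) with hd
  have hdpos : 0 < d := by positivity
  have hNlb : ∀ t, 0 ≤ t → N 0 ≤ N t := fun t ht =>
    hNmono (Set.mem_Ici.mpr le_rfl) (Set.mem_Ici.mpr ht) ht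
  -- growth claim: N grows without bound
  have grow : ∀ n : ℕ, ∃ t, 0 ≤ t ∧ N 0 + n * d ≤ N t := by
    intro n
    induction n with
    | zero => exact ⟨0, le_rfl, by simp⟩
    | succ n ih =>
      obtain ⟨t, ht0, htN⟩ := ih
      obtain ⟨s, hst, hs0, hΦs⟩ := hfreq' (t + h)
      have hsh : t ≤ s - h := by linarith
      have hsh0 : (0:ℝ) ≤ s - h := le_trans ht0 hsh
      -- Φ ≥ ε/2 on [s-h, s]
      have hΦlow : ∀ u, s - h ≤ u → u ≤ s → ε / 2 ≤ Φ u := by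
        intro u hu1 hu2
        rcases eq_or_lt_of_le hu2 with heq | hlt
        · rw [heq]; linarith
        · have hu0 : 0 ≤ u := le_trans hsh0 hu1
          have hcont : ContinuousOn Φ (Set.Icc u s) := fun x hx =>
            ((hΦderiv x (le_trans hu0 hx.1)).continuousAt).continuousWithinAt
          obtain ⟨c, hc, hceq⟩ := exists_hasDerivAt_eq_slope Φ Φ' hlt hcont
            (fun x hx => hΦderiv x (le_trans hu0 hx.1.le))
          have hc0 : 0 ≤ c := le_trans hu0 hc.1.le
          have h1 : Φ' c ≤ γ * K := le_trans (hub c hc0)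
            (mul_le_mul_of_nonneg_left (hΦle c hc0) hγ.le)
          rw [hceq] at h1
          have hsu : 0 < s - u := by linarith
          rw [div_le_iff₀ hsu] at h1
          have h3 : γ * K * (s - u) ≤ γ * K * h := by
            apply mul_le_mul_of_nonneg_left _ hγK.le; linarith
          have h4 : γ * K * h = ε / 2 := by
            rw [hh]; field_simp
          linarith
      -- MVT for N on [s-h, s]
      have hlt2 : s - h < s := by linarith
      have hcontN : ContinuousOn N (Set.Icc (s - h) s) := fun x hx =>
        ((hNderiv x (le_trans hsh0 hx.1)).continuousAt).continuousWithinAt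
      obtain ⟨c, hc, hceq⟩ := exists_hasDerivAt_eq_slope N N' hlt2 hcontN
        (fun x hx => hNderiv x (le_trans hsh0 hx.1.le))
      have hc0 : 0 ≤ c := le_trans hsh0 hc.1.le
      have hN'c : β₂ * N 0 * (ε / 2) ≤ N' c := by
        have hlb := hN'lb c hc0
        have h1 : N 0 ≤ N c := hNlb c hc0
        have h2 : ε / 2 ≤ Φ c := hΦlow c hc.1.le hc.2.le
        have hm : N 0 * (ε / 2) ≤ N c * Φ c :=
          mul_le_mul h1 h2 (by linarith) (hNnonneg c hc0)
        nlinarith [hm, hβ₂.le]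
      refine ⟨s, hs0, ?_⟩
      have hden : s - (s - h) = h := by ring
      rw [hden] at hceq
      have hstep : d ≤ N s - N (s - h) := by
        have := hceq ▸ hN'c
        rw [le_div_iff₀ hhpos] at this
        rw [hd]; nlinarith
      have hNmono2 : N t ≤ N (s - h) :=
        hNmono (Set.mem_Ici.mpr ht0) (Set.mem_Ici.mpr hsh0) hsh
      push_cast
      linarith
  -- obtain a point where N is large
  obtain ⟨n, hn⟩ := exists_nat_ge (((γ + 1) / β₂ - N 0) / d)
  obtain ⟨t₁, ht₁0, ht₁N⟩ := grow n
  have hNbig : γ + 1 ≤ β₂ * N t₁ := by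
    rw [div_le_iff₀ hdpos] at hn
    have h1 : (γ + 1) / β₂ ≤ N t₁ := by linarith
    rw [div_le_iff₀ hβ₂] at h1
    linarith [h1]
  -- exponential decay after t₁
  have hdecay : ∀ t, t₁ ≤ t → Φ' t ≤ -Φ t := by
    intro t ht
    have ht0 : 0 ≤ t := le_trans ht₁0 ht
    have h1 := hub2 t ht0
    have h2 : N t₁ ≤ N t :=
      hNmono (Set.mem_Ici.mpr ht₁0) (Set.mem_Ici.mpr ht0) ht
    have h3 := hΦnonneg t ht0
    have h4 : β₂ * N t₁ * Φ t ≤ β₂ * N t * Φ t :=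
      mul_le_mul_of_nonneg_right (mul_le_mul_of_nonneg_left h2 hβ₂.le) h3
    have h5 : (γ + 1) * Φ t ≤ β₂ * N t₁ * Φ t :=
      mul_le_mul_of_nonneg_right hNbig h3
    nlinarith
  set g : ℝ → ℝ := fun t => Real.exp t * Φ t with hg
  have hgderiv : ∀ t, 0 ≤ t → HasDerivAt g (Real.exp t * (Φ t + Φ' t)) t := by
    intro t ht
    have := (Real.hasDerivAt_exp t).mul (hΦderiv t ht)
    exact this.congr_deriv (by ring)
  have hanti : AntitoneOn g (Set.Ici t₁) := by
    refine antitoneOn_of_deriv_nonpos (convex_Ici t₁)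
      (fun x hx => (hgderiv x (le_trans ht₁0 hx)).continuousAt.continuousWithinAt)
      ?_ ?_
    · intro x hx
      rw [interior_Ici] at hx
      exact (hgderiv x (le_trans ht₁0 hx.le)).differentiableAt.differentiableWithinAt
    · intro x hx
      rw [interior_Ici] at hx
      have hx0 : 0 ≤ x := le_trans ht₁0 hx.le
      rw [(hgderiv x hx0).deriv]
      have h1 := hdecay x hx.le
      exact mul_nonpos_of_nonneg_of_nonpos (Real.exp_pos x).le (by linarith)
  -- final contradiction
  have hεK : (0:ℝ) < ε / (2 * K) := by positivity
  obtain ⟨t, htA, ht0, hΦt⟩ := hfreq' (max t₁ (t₁ - Real.log (ε / (2 * K))))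
  have ht1 : t₁ ≤ t := le_trans (le_max_left _ _) htA
  have hgle : Real.exp t * Φ t ≤ Real.exp t₁ * Φ t₁ :=
    hanti (Set.mem_Ici.mpr le_rfl) (Set.mem_Ici.mpr ht1) ht1
  have hexp : Real.exp t₁ * (2 * K / ε) ≤ Real.exp t := by
    have h1 : t₁ - Real.log (ε / (2 * K)) ≤ t := le_trans (le_max_right _ _) htA
    calc Real.exp t₁ * (2 * K / ε) = Real.exp (t₁ - Real.log (ε / (2 * K))) := by
          rw [Real.exp_sub, Real.exp_log hεK]; field_simp
      _ ≤ Real.exp t := Real.exp_le_exp.mpr h1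
  have hΦt₁ : Φ t₁ ≤ K := hΦle t₁ ht₁0
  have hexp1 := Real.exp_pos t₁
  have hexpt := Real.exp_pos t
  have key : ε * (Real.exp t₁ * (2 * K / ε)) = 2 * K * Real.exp t₁ := by
    field_simp
  have h5 : ε * (Real.exp t₁ * (2 * K / ε)) ≤ ε * Real.exp t :=
    mul_le_mul_of_nonneg_left hexp hε.le
  have h6 : Real.exp t * ε ≤ Real.exp t * Φ t :=
    mul_le_mul_of_nonneg_left hΦt hexpt.le
  have h7 : Real.exp t₁ * Φ t₁ ≤ Real.exp t₁ * K :=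
    mul_le_mul_of_nonneg_left hΦt₁ hexp1.le
  linarith [mul_pos hK hexp1]
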